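/- Let 0 < τ₁ < τ₂ and σ₀ > 0, and define d(ξ) = S·(∫_0^{τ₁} θ^{-1/2} e^{Ξ²(θ-τ₁)} dθ · ∫_0^{τ₂} θ^{1/2} e^{Ξ²(θ-τ₂)} dθ − ∫_0^{τ₁} θ^{1/2} e^{Ξ²(θ-τ₁)} dθ · ∫_0^{τ₂} θ^{-1/2} e^{Ξ²(θ-τ₂)} dθ), where Ξ = σ₀ξ/√2 and S > 0 is a constant. Then there exists C ≥ 1 such that C^{-1}(1+ξ²)^{-2} ≤ d(ξ) ≤ C(1+ξ²)^{-2} for all real ξ. -/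

import Mathlib

open MeasureTheory Real

/-! Auxiliary lemmas -/

lemma my_expc_cont (lam c : ℝ) : Continuous fun θ : ℝ => Real.exp (lam * (θ - c)) :=
  Real.continuous_exp.comp (continuous_const.mul (continuous_id.sub continuous_const))

lemma my_expc_deriv (lam b x : ℝ) :
    HasDerivAt (fun θ => Real.exp (lam * (θ - b))) (lam * Real.exp (lam * (x - b))) x := by
  have h1 : HasDerivAt (fun θ : ℝ => lam * (θ - b)) lam x := by
    simpa using ((hasDerivAt_id x).sub_const b).const_mul lam
  simpa [mul_comm, Function.comp_def] using (Real.hasDerivAt_exp (lam * (x - b))).comp x h1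

lemma my_lamJ (lam a b : ℝ) :
    ∫ θ in a..b, lam * Real.exp (lam * (θ - b)) = 1 - Real.exp (lam * (a - b)) := by
  have h := intervalIntegral.integral_eq_sub_of_hasDerivAt
    (f := fun θ => Real.exp (lam * (θ - b))) (f' := fun θ => lam * Real.exp (lam * (θ - b)))
    (fun x _ => my_expc_deriv lam b x)
    ((continuous_const.mul (my_expc_cont lam b)).intervalIntegrable a b)
  simpa using h

lemma my_J_nonneg (lam : ℝ) {a b : ℝ} (hab : a ≤ b) :
    0 ≤ ∫ θ in a..b, Real.exp (lam * (θ - b)) :=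
  intervalIntegral.integral_nonneg hab (fun u _ => (Real.exp_pos _).le)

lemma my_J_le (lam : ℝ) (hlam : 0 ≤ lam) {a b : ℝ} (hab : a ≤ b) :
    ∫ θ in a..b, Real.exp (lam * (θ - b)) ≤ b - a := by
  have h : ∫ θ in a..b, Real.exp (lam * (θ - b)) ≤ ∫ _θ in a..b, (1 : ℝ) := by
    apply intervalIntegral.integral_mono_on hab
      ((my_expc_cont lam b).intervalIntegrable a b)
      (intervalIntegrable_const) (fun x hx => ?_)
    exact Real.exp_le_one_iff.mpr (mul_nonpos_of_nonneg_of_nonpos hlam (by linarith [hx.2]))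
  simpa using h

lemma my_lamJ_le_one (lam : ℝ) (a b : ℝ) :
    lam * ∫ θ in a..b, Real.exp (lam * (θ - b)) ≤ 1 := by
  rw [← intervalIntegral.integral_const_mul, my_lamJ]
  have := Real.exp_pos (lam * (a - b)); linarith

lemma my_J_upper (lam : ℝ) (hlam : 0 ≤ lam) {a b : ℝ} (hab : a ≤ b) :
    (1 + lam) * ∫ θ in a..b, Real.exp (lam * (θ - b)) ≤ (b - a) + 1 := by
  have h1 := my_J_le lam hlam hab
  have h2 := my_lamJ_le_one lam a b
  nlinarith [my_J_nonneg lam hab]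

lemma my_J_lower (lam : ℝ) (hlam : 0 ≤ lam) {a b : ℝ} (hab : a ≤ b) :
    min (b - a) 1 / (Real.exp 1 * (1 + lam)) ≤ ∫ θ in a..b, Real.exp (lam * (θ - b)) := by
  have h1lam : (0:ℝ) < 1 + lam := by linarith
  set m := min (b - a) (1 / (1 + lam)) with hm
  have hm0 : 0 ≤ m := le_min (by linarith) (by positivity)
  have hm1 : m ≤ b - a := min_le_left _ _
  have hm2 : lam * m ≤ 1 := by
    calc lam * m ≤ lam * (1 / (1 + lam)) :=
          mul_le_mul_of_nonneg_left (min_le_right _ _) hlam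
      _ ≤ 1 := by rw [mul_one_div, div_le_one h1lam]; linarith
  have step1 : ∫ θ in (b - m)..b, Real.exp (lam * (θ - b)) ≤
      ∫ θ in a..b, Real.exp (lam * (θ - b)) := by
    apply intervalIntegral.integral_mono_interval (by linarith) (by linarith) le_rfl
    · exact Filter.Eventually.of_forall fun x => (Real.exp_pos _).le
    · exact (my_expc_cont lam b).intervalIntegrable a b
  have step2 : m * Real.exp (-1) ≤ ∫ θ in (b - m)..b, Real.exp (lam * (θ - b)) := by
    have h := intervalIntegral.integral_mono_on (by linarith : b - m ≤ b)
      (intervalIntegrable_const (μ := volume) (a := b - m) (b := b) (c := Real.exp (-1)))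
      ((my_expc_cont lam b).intervalIntegrable _ _)
      (fun x hx => Real.exp_le_exp.mpr (by nlinarith [hx.1]))
    simpa [smul_eq_mul, mul_comm] using h
  have step3 : min (b - a) 1 / (Real.exp 1 * (1 + lam)) ≤ m * Real.exp (-1) := by
    have hmin : min (b - a) 1 / (1 + lam) ≤ m := by
      rcases le_total (b - a) (1 / (1 + lam)) with h | h
      · have hmeq : m = b - a := min_eq_left h
        rw [hmeq, div_le_iff₀ h1lam]
        nlinarith [min_le_left (b - a) (1:ℝ), le_min (by linarith : (0:ℝ) ≤ b - a) zero_le_one]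
      · have hmeq : m = 1 / (1 + lam) := min_eq_right h
        rw [hmeq, div_le_div_iff₀ h1lam h1lam]
        nlinarith [min_le_right (b - a) (1:ℝ)]
    have he : (0:ℝ) < Real.exp 1 := Real.exp_pos 1
    have heq : min (b - a) 1 / (Real.exp 1 * (1 + lam))
        = (min (b - a) 1 / (1 + lam)) / Real.exp 1 := by
      rw [div_div, mul_comm]
    rw [heq, Real.exp_neg, ← div_eq_mul_inv]
    exact (div_le_div_iff_of_pos_right he).mpr hmin
  calc min (b - a) 1 / (Real.exp 1 * (1 + lam)) ≤ m * Real.exp (-1) := step3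
    _ ≤ _ := le_trans step2 step1

lemma my_intInt_one_div_sqrt {a b : ℝ} (ha : 0 ≤ a) (hab : a ≤ b) :
    IntervalIntegrable (fun θ => 1 / Real.sqrt θ) volume a b := by
  have h := intervalIntegral.intervalIntegrable_rpow' (a := a) (b := b)
    (r := -(1/2)) (by norm_num)
  apply h.congr
  rw [Set.uIoc_of_le hab]
  refine fun θ hθ => ?_
  have hθ0 : 0 < θ := lt_of_le_of_lt ha hθ.1
  show θ ^ (-(1/2) : ℝ) = 1 / Real.sqrt θ
  rw [Real.rpow_neg hθ0.le, Real.sqrt_eq_rpow]; norm_num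

lemma my_intInt_contDiv_sqrt {g : ℝ → ℝ} (hg : Continuous g) {a b : ℝ} (ha : 0 ≤ a)
    (hab : a ≤ b) : IntervalIntegrable (fun θ => g θ / Real.sqrt θ) volume a b := by
  have h := (my_intInt_one_div_sqrt ha hab).mul_continuousOn hg.continuousOn
  have heq : (fun θ => g θ / Real.sqrt θ) = fun θ => (1 / Real.sqrt θ) * g θ := by
    funext θ; rw [one_div_mul_eq_div]
  rw [heq]; exact h

lemma my_intInt_exp_div_sqrt (lam c : ℝ) {a b : ℝ} (ha : 0 ≤ a) (hab : a ≤ b) :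
    IntervalIntegrable (fun θ => Real.exp (lam * (θ - c)) / Real.sqrt θ) volume a b :=
  my_intInt_contDiv_sqrt (my_expc_cont lam c) ha hab

lemma my_int_one_div_sqrt (τ : ℝ) (hτ : 0 ≤ τ) :
    ∫ θ in (0:ℝ)..τ, 1 / Real.sqrt θ = 2 * Real.sqrt τ := by
  have hcong : ∫ θ in (0:ℝ)..τ, 1 / Real.sqrt θ = ∫ θ in (0:ℝ)..τ, θ ^ (-(1/2) : ℝ) := by
    apply intervalIntegral.integral_congr
    intro θ hθ
    rw [Set.uIcc_of_le hτ] at hθ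
    rcases eq_or_lt_of_le hθ.1 with h | h
    · rw [← h]; simp [Real.zero_rpow (by norm_num : (-(1/2) : ℝ) ≠ 0)]
    · show 1 / Real.sqrt θ = θ ^ (-(1/2) : ℝ)
      rw [Real.rpow_neg h.le, Real.sqrt_eq_rpow]; norm_num
  rw [hcong, integral_rpow (Or.inl (by norm_num))]
  norm_num [Real.sqrt_eq_rpow, Real.zero_rpow]
  ring

lemma my_div_sqrt_nonneg (c θ : ℝ) (hc : 0 ≤ c) : 0 ≤ c / Real.sqrt θ :=
  div_nonneg hc (Real.sqrt_nonneg θ)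

lemma my_A_nonneg (lam τ : ℝ) (hτ : 0 ≤ τ) :
    0 ≤ ∫ θ in (0:ℝ)..τ, Real.exp (lam * (θ - τ)) / Real.sqrt θ :=
  intervalIntegral.integral_nonneg hτ
    (fun _ _ => my_div_sqrt_nonneg _ _ (Real.exp_pos _).le)

lemma my_A_le (lam τ : ℝ) (hlam : 0 ≤ lam) (hτ : 0 < τ) :
    ∫ θ in (0:ℝ)..τ, Real.exp (lam * (θ - τ)) / Real.sqrt θ ≤ 2 * Real.sqrt τ := by
  rw [← my_int_one_div_sqrt τ hτ.le]
  apply intervalIntegral.integral_mono_on hτ.le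
    (my_intInt_exp_div_sqrt lam τ le_rfl hτ.le)
    (my_intInt_one_div_sqrt le_rfl hτ.le)
  intro x hx
  rw [div_eq_mul_inv, div_eq_mul_inv]
  exact mul_le_mul_of_nonneg_right
    (Real.exp_le_one_iff.mpr (mul_nonpos_of_nonneg_of_nonpos hlam (by linarith [hx.2])))
    (inv_nonneg.mpr (Real.sqrt_nonneg x))

lemma my_lamA_le (lam τ : ℝ) (hlam : 0 ≤ lam) (hτ : 0 < τ) :
    lam * ∫ θ in (0:ℝ)..τ, Real.exp (lam * (θ - τ)) / Real.sqrt θ ≤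
      4 * Real.sqrt (τ/2) / τ + 1 / Real.sqrt (τ/2) := by
  have hint : ∀ a b : ℝ, 0 ≤ a → a ≤ b →
      IntervalIntegrable (fun θ => lam * Real.exp (lam * (θ - τ)) / Real.sqrt θ) volume a b :=
    fun a b ha hab => my_intInt_contDiv_sqrt (continuous_const.mul (my_expc_cont lam τ)) ha hab
  have hsplit : (∫ θ in (0:ℝ)..τ, lam * Real.exp (lam * (θ - τ)) / Real.sqrt θ) =
      (∫ θ in (0:ℝ)..(τ/2), lam * Real.exp (lam * (θ - τ)) / Real.sqrt θ) +
      ∫ θ in (τ/2)..τ, lam * Real.exp (lam * (θ - τ)) / Real.sqrt θ :=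
    (intervalIntegral.integral_add_adjacent_intervals
      (hint 0 (τ/2) le_rfl (by linarith)) (hint (τ/2) τ (by linarith) (by linarith))).symm
  have hpull : lam * (∫ θ in (0:ℝ)..τ, Real.exp (lam * (θ - τ)) / Real.sqrt θ) =
      ∫ θ in (0:ℝ)..τ, lam * Real.exp (lam * (θ - τ)) / Real.sqrt θ := by
    rw [← intervalIntegral.integral_const_mul]
    apply intervalIntegral.integral_congr
    intro θ _; exact (mul_div_assoc _ _ _).symm
  -- first piece
  have hconst : lam * Real.exp (-(lam * (τ/2))) ≤ 2 / τ := by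
    rcases eq_or_lt_of_le hlam with h | h
    · rw [← h]; simp; positivity
    · have hx := Real.add_one_le_exp (lam * (τ/2))
      rw [Real.exp_neg, ← div_eq_mul_inv, div_le_div_iff₀ (Real.exp_pos _) hτ]
      nlinarith [Real.exp_pos (lam * (τ/2))]
  have h1 : (∫ θ in (0:ℝ)..(τ/2), lam * Real.exp (lam * (θ - τ)) / Real.sqrt θ) ≤
      4 * Real.sqrt (τ/2) / τ := by
    have hmono : (∫ θ in (0:ℝ)..(τ/2), lam * Real.exp (lam * (θ - τ)) / Real.sqrt θ) ≤
        ∫ θ in (0:ℝ)..(τ/2), lam * Real.exp (-(lam * (τ/2))) * (1 / Real.sqrt θ) := by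
      apply intervalIntegral.integral_mono_on (by linarith)
        (hint 0 (τ/2) le_rfl (by linarith))
        (((my_intInt_one_div_sqrt le_rfl (by linarith : (0:ℝ) ≤ τ/2)).const_mul _))
      intro x hx
      rw [mul_one_div, div_eq_mul_inv, div_eq_mul_inv]
      apply mul_le_mul_of_nonneg_right _ (inv_nonneg.mpr (Real.sqrt_nonneg x))
      apply mul_le_mul_of_nonneg_left _ hlam
      exact Real.exp_le_exp.mpr (by nlinarith [hx.2])
    rw [intervalIntegral.integral_const_mul, my_int_one_div_sqrt (τ/2) (by linarith)] at hmono
    calc (∫ θ in (0:ℝ)..(τ/2), lam * Real.exp (lam * (θ - τ)) / Real.sqrt θ)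
        ≤ lam * Real.exp (-(lam * (τ/2))) * (2 * Real.sqrt (τ/2)) := hmono
      _ ≤ 2 / τ * (2 * Real.sqrt (τ/2)) :=
          mul_le_mul_of_nonneg_right hconst (by positivity)
      _ = 4 * Real.sqrt (τ/2) / τ := by field_simp; ring
  -- second piece
  have h2 : (∫ θ in (τ/2)..τ, lam * Real.exp (lam * (θ - τ)) / Real.sqrt θ) ≤
      1 / Real.sqrt (τ/2) := by
    have hs : (0:ℝ) < Real.sqrt (τ/2) := Real.sqrt_pos.mpr (by linarith)
    have hmono : (∫ θ in (τ/2)..τ, lam * Real.exp (lam * (θ - τ)) / Real.sqrt θ) ≤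
        ∫ θ in (τ/2)..τ, (1 / Real.sqrt (τ/2)) * (lam * Real.exp (lam * (θ - τ))) := by
      apply intervalIntegral.integral_mono_on (by linarith)
        (hint (τ/2) τ (by linarith) (by linarith))
        (((continuous_const.mul (my_expc_cont lam τ)).intervalIntegrable _ _).const_mul _)
      intro x hx
      rw [one_div, inv_mul_eq_div, div_le_div_iff₀ (Real.sqrt_pos.mpr (by nlinarith [hx.1])) hs]
      apply mul_le_mul_of_nonneg_left (Real.sqrt_le_sqrt (by linarith [hx.1]))
      positivity
    rw [intervalIntegral.integral_const_mul] at hmono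
    calc (∫ θ in (τ/2)..τ, lam * Real.exp (lam * (θ - τ)) / Real.sqrt θ)
        ≤ (1 / Real.sqrt (τ/2)) * ∫ θ in (τ/2)..τ, lam * Real.exp (lam * (θ - τ)) := hmono
      _ ≤ (1 / Real.sqrt (τ/2)) * 1 := by
          apply mul_le_mul_of_nonneg_left _ (by positivity)
          rw [intervalIntegral.integral_const_mul]
          exact my_lamJ_le_one lam (τ/2) τ
      _ = 1 / Real.sqrt (τ/2) := mul_one _
  rw [hpull, hsplit]
  linarith

lemma my_A_upper (lam τ : ℝ) (hlam : 0 ≤ lam) (hτ : 0 < τ) :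
    (1 + lam) * ∫ θ in (0:ℝ)..τ, Real.exp (lam * (θ - τ)) / Real.sqrt θ ≤
      2 * Real.sqrt τ + (4 * Real.sqrt (τ/2) / τ + 1 / Real.sqrt (τ/2)) := by
  have h1 := my_A_le lam τ hlam hτ
  have h2 := my_lamA_le lam τ hlam hτ
  nlinarith [my_A_nonneg lam τ hτ.le]

lemma my_A_lower (lam τ : ℝ) (hlam : 0 ≤ lam) (hτ : 0 < τ) :
    (1 / Real.sqrt τ) * (min (τ/2) 1 / (Real.exp 1 * (1 + lam))) ≤
      ∫ θ in (0:ℝ)..τ, Real.exp (lam * (θ - τ)) / Real.sqrt θ := by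
  have hs : (0:ℝ) < Real.sqrt τ := Real.sqrt_pos.mpr hτ
  have h1 : (∫ θ in (τ/2)..τ, Real.exp (lam * (θ - τ)) / Real.sqrt θ) ≤
      ∫ θ in (0:ℝ)..τ, Real.exp (lam * (θ - τ)) / Real.sqrt θ := by
    apply intervalIntegral.integral_mono_interval (by linarith) (by linarith) le_rfl
    · exact Filter.Eventually.of_forall fun x => my_div_sqrt_nonneg _ _ (Real.exp_pos _).le
    · exact my_intInt_exp_div_sqrt lam τ le_rfl hτ.le
  have h2 : (∫ θ in (τ/2)..τ, Real.exp (lam * (θ - τ)) / Real.sqrt τ) ≤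
      ∫ θ in (τ/2)..τ, Real.exp (lam * (θ - τ)) / Real.sqrt θ := by
    apply intervalIntegral.integral_mono_on (by linarith)
      (((my_expc_cont lam τ).div_const _).intervalIntegrable _ _)
      (my_intInt_exp_div_sqrt lam τ (by linarith) (by linarith))
    intro x hx
    apply div_le_div_of_nonneg_left (Real.exp_pos _).le
      (Real.sqrt_pos.mpr (by nlinarith [hx.1]))
      (Real.sqrt_le_sqrt hx.2)
  rw [intervalIntegral.integral_div] at h2
  have h3 := my_J_lower lam hlam (by linarith : τ/2 ≤ τ)
  have h4 : τ - τ/2 = τ/2 := by ring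
  rw [h4] at h3
  have h5 : (1 / Real.sqrt τ) * (min (τ/2) 1 / (Real.exp 1 * (1 + lam))) ≤
      (∫ θ in (τ/2)..τ, Real.exp (lam * (θ - τ))) / Real.sqrt τ := by
    rw [one_div, inv_mul_eq_div, div_le_div_iff₀ hs hs]
    exact mul_le_mul_of_nonneg_right h3 hs.le
  linarith

lemma my_B_nonneg (lam τ : ℝ) (hτ : 0 ≤ τ) :
    0 ≤ ∫ θ in (0:ℝ)..τ, Real.sqrt θ * Real.exp (lam * (θ - τ)) :=
  intervalIntegral.integral_nonneg hτ
    (fun u _ => mul_nonneg (Real.sqrt_nonneg _) (Real.exp_pos _).le)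

lemma my_B_le_tauA (lam τ : ℝ) (hτ : 0 < τ) :
    (∫ θ in (0:ℝ)..τ, Real.sqrt θ * Real.exp (lam * (θ - τ))) ≤
      τ * ∫ θ in (0:ℝ)..τ, Real.exp (lam * (θ - τ)) / Real.sqrt θ := by
  rw [← intervalIntegral.integral_const_mul]
  apply intervalIntegral.integral_mono_on hτ.le
    ((Real.continuous_sqrt.mul (my_expc_cont lam τ)).intervalIntegrable _ _)
    ((my_intInt_exp_div_sqrt lam τ le_rfl hτ.le).const_mul τ)
  intro x hx
  rcases eq_or_lt_of_le hx.1 with h | h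
  · rw [← h]; simp
  · have hs : (0:ℝ) < Real.sqrt x := Real.sqrt_pos.mpr h
    show Real.sqrt x * Real.exp (lam * (x - τ)) ≤ τ * (Real.exp (lam * (x - τ)) / Real.sqrt x)
    rw [← mul_div_assoc, le_div_iff₀ hs, mul_right_comm, Real.mul_self_sqrt h.le]
    apply mul_le_mul_of_nonneg_right hx.2 (Real.exp_pos _).le

lemma my_key_identity (lam τ₁ τ₂ : ℝ) (h1 : 0 < τ₁) (h12 : τ₁ < τ₂) :
    (∫ θ in (0:ℝ)..τ₁, Real.exp (lam * (θ - τ₁)) / Real.sqrt θ) *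
        (∫ θ in (0:ℝ)..τ₂, Real.sqrt θ * Real.exp (lam * (θ - τ₂))) -
      (∫ θ in (0:ℝ)..τ₁, Real.sqrt θ * Real.exp (lam * (θ - τ₁))) *
        (∫ θ in (0:ℝ)..τ₂, Real.exp (lam * (θ - τ₂)) / Real.sqrt θ) =
    ∫ θ in τ₁..τ₂,
      (Real.sqrt θ * (∫ u in (0:ℝ)..τ₁, Real.exp (lam * (u - τ₁)) / Real.sqrt u) -
        (∫ u in (0:ℝ)..τ₁, Real.sqrt u * Real.exp (lam * (u - τ₁))) / Real.sqrt θ) *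
      Real.exp (lam * (θ - τ₂)) := by
  set A₁ := ∫ u in (0:ℝ)..τ₁, Real.exp (lam * (u - τ₁)) / Real.sqrt u with hA₁
  set B₁ := ∫ u in (0:ℝ)..τ₁, Real.sqrt u * Real.exp (lam * (u - τ₁)) with hB₁
  have hexp : ∀ θ : ℝ, Real.exp (lam * (θ - τ₂)) =
      Real.exp (lam * (τ₁ - τ₂)) * Real.exp (lam * (θ - τ₁)) := by
    intro θ; rw [← Real.exp_add]; congr 1; ring
  have hA2 : (∫ θ in (0:ℝ)..τ₂, Real.exp (lam * (θ - τ₂)) / Real.sqrt θ) =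
      Real.exp (lam * (τ₁ - τ₂)) * A₁ +
        ∫ θ in τ₁..τ₂, Real.exp (lam * (θ - τ₂)) / Real.sqrt θ := by
    rw [← intervalIntegral.integral_add_adjacent_intervals
      (my_intInt_exp_div_sqrt lam τ₂ le_rfl h1.le)
      (my_intInt_exp_div_sqrt lam τ₂ h1.le (by linarith))]
    congr 1
    rw [hA₁, ← intervalIntegral.integral_const_mul]
    apply intervalIntegral.integral_congr
    intro θ _
    show Real.exp (lam * (θ - τ₂)) / Real.sqrt θ
      = Real.exp (lam * (τ₁ - τ₂)) * (Real.exp (lam * (θ - τ₁)) / Real.sqrt θ)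
    rw [hexp θ, mul_div_assoc]
  have hB2 : (∫ θ in (0:ℝ)..τ₂, Real.sqrt θ * Real.exp (lam * (θ - τ₂))) =
      Real.exp (lam * (τ₁ - τ₂)) * B₁ +
        ∫ θ in τ₁..τ₂, Real.sqrt θ * Real.exp (lam * (θ - τ₂)) := by
    rw [← intervalIntegral.integral_add_adjacent_intervals
      (f := fun θ => Real.sqrt θ * Real.exp (lam * (θ - τ₂)))
      ((Real.continuous_sqrt.mul (my_expc_cont lam τ₂)).intervalIntegrable 0 τ₁)
      ((Real.continuous_sqrt.mul (my_expc_cont lam τ₂)).intervalIntegrable τ₁ τ₂)]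
    congr 1
    rw [hB₁, ← intervalIntegral.integral_const_mul]
    apply intervalIntegral.integral_congr
    intro θ _
    show Real.sqrt θ * Real.exp (lam * (θ - τ₂))
      = Real.exp (lam * (τ₁ - τ₂)) * (Real.sqrt θ * Real.exp (lam * (θ - τ₁)))
    rw [hexp θ]; ring
  rw [hA2, hB2]
  have hrhs : (∫ θ in τ₁..τ₂,
      (Real.sqrt θ * A₁ - B₁ / Real.sqrt θ) * Real.exp (lam * (θ - τ₂))) =
      A₁ * (∫ θ in τ₁..τ₂, Real.sqrt θ * Real.exp (lam * (θ - τ₂))) -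
      B₁ * ∫ θ in τ₁..τ₂, Real.exp (lam * (θ - τ₂)) / Real.sqrt θ := by
    rw [← intervalIntegral.integral_const_mul, ← intervalIntegral.integral_const_mul,
      ← intervalIntegral.integral_sub
        (f := fun θ => A₁ * (Real.sqrt θ * Real.exp (lam * (θ - τ₂))))
        (((Real.continuous_sqrt.mul (my_expc_cont lam τ₂)).intervalIntegrable τ₁ τ₂).const_mul A₁)
        ((my_intInt_exp_div_sqrt lam τ₂ h1.le (by linarith)).const_mul B₁)]
    apply intervalIntegral.integral_congr
    intro θ _
    show (Real.sqrt θ * A₁ - B₁ / Real.sqrt θ) * Real.exp (lam * (θ - τ₂))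
      = A₁ * (Real.sqrt θ * Real.exp (lam * (θ - τ₂)))
        - B₁ * (Real.exp (lam * (θ - τ₂)) / Real.sqrt θ)
    ring
  rw [hrhs]
  ring

noncomputable def myCLow (τ₁ τ₂ : ℝ) : ℝ :=
  ((τ₁ + τ₂)/2 - τ₁) / Real.sqrt τ₂ *
    (1 / Real.sqrt τ₁ * (min (τ₁/2) 1 / Real.exp 1)) *
    (min ((τ₂ - τ₁)/2) 1 / Real.exp 1)

noncomputable def myCUp (τ₁ τ₂ : ℝ) : ℝ :=
  Real.sqrt τ₂ * (2 * Real.sqrt τ₁ + (4 * Real.sqrt (τ₁/2) / τ₁ + 1 / Real.sqrt (τ₁/2))) *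
    ((τ₂ - τ₁) + 1)

lemma myCLow_pos {τ₁ τ₂ : ℝ} (h1 : 0 < τ₁) (h12 : τ₁ < τ₂) : 0 < myCLow τ₁ τ₂ := by
  unfold myCLow
  have e1 : (0:ℝ) < (τ₁ + τ₂)/2 - τ₁ := by linarith
  have e2 : (0:ℝ) < min (τ₁/2) 1 := lt_min (by linarith) one_pos
  have e3 : (0:ℝ) < min ((τ₂ - τ₁)/2) 1 := lt_min (by linarith) one_pos
  have e4 : (0:ℝ) < Real.sqrt τ₂ := Real.sqrt_pos.mpr (by linarith)
  have e5 : (0:ℝ) < Real.sqrt τ₁ := Real.sqrt_pos.mpr h1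
  positivity

lemma myCUp_pos {τ₁ τ₂ : ℝ} (h1 : 0 < τ₁) (h12 : τ₁ < τ₂) : 0 < myCUp τ₁ τ₂ := by
  unfold myCUp
  have e4 : (0:ℝ) < Real.sqrt τ₂ := Real.sqrt_pos.mpr (by linarith)
  have e5 : (0:ℝ) < Real.sqrt τ₁ := Real.sqrt_pos.mpr h1
  have e6 : (0:ℝ) < Real.sqrt (τ₁/2) := Real.sqrt_pos.mpr (by linarith)
  have e7 : (0:ℝ) < (τ₂ - τ₁) + 1 := by linarith
  positivity

lemma my_g_intable (lam τ₂ A₁ B₁ : ℝ) {a b : ℝ} (ha : 0 < a) (hab : a ≤ b) :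
    IntervalIntegrable
      (fun θ => (Real.sqrt θ * A₁ - B₁ / Real.sqrt θ) * Real.exp (lam * (θ - τ₂)))
      volume a b := by
  apply ContinuousOn.intervalIntegrable
  apply ContinuousOn.mul _ (my_expc_cont lam τ₂).continuousOn
  apply ContinuousOn.sub (Real.continuous_sqrt.continuousOn.mul continuousOn_const)
  apply ContinuousOn.div continuousOn_const Real.continuous_sqrt.continuousOn
  intro x hx
  rw [Set.uIcc_of_le hab] at hx
  exact ne_of_gt (Real.sqrt_pos.mpr (lt_of_lt_of_le ha hx.1))

lemma my_D_lower (lam τ₁ τ₂ : ℝ) (hlam : 0 ≤ lam) (h1 : 0 < τ₁) (h12 : τ₁ < τ₂) :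
    myCLow τ₁ τ₂ / (1 + lam)^2 ≤
      (∫ θ in (0:ℝ)..τ₁, Real.exp (lam * (θ - τ₁)) / Real.sqrt θ) *
          (∫ θ in (0:ℝ)..τ₂, Real.sqrt θ * Real.exp (lam * (θ - τ₂))) -
        (∫ θ in (0:ℝ)..τ₁, Real.sqrt θ * Real.exp (lam * (θ - τ₁))) *
          (∫ θ in (0:ℝ)..τ₂, Real.exp (lam * (θ - τ₂)) / Real.sqrt θ) := by
  rw [my_key_identity lam τ₁ τ₂ h1 h12]
  set A₁ := ∫ u in (0:ℝ)..τ₁, Real.exp (lam * (u - τ₁)) / Real.sqrt u with hA₁def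
  set B₁ := ∫ u in (0:ℝ)..τ₁, Real.sqrt u * Real.exp (lam * (u - τ₁)) with hB₁def
  have hA1nn : 0 ≤ A₁ := my_A_nonneg lam τ₁ h1.le
  have hB1A : B₁ ≤ τ₁ * A₁ := my_B_le_tauA lam τ₁ h1
  have hB1nn : 0 ≤ B₁ := my_B_nonneg lam τ₁ h1.le
  have h1lam : (0:ℝ) < 1 + lam := by linarith
  set τs := (τ₁ + τ₂)/2 with hτs
  have hτs1 : τ₁ < τs := by rw [hτs]; linarith
  have hτs2 : τs < τ₂ := by rw [hτs]; linarith
  -- pointwise lower bound for the first factor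
  have hpt : ∀ θ : ℝ, τ₁ ≤ θ →
      A₁ * (θ - τ₁) / Real.sqrt θ ≤ Real.sqrt θ * A₁ - B₁ / Real.sqrt θ := by
    intro θ hθ
    have hθ0 : 0 < θ := lt_of_lt_of_le h1 hθ
    have hs : 0 < Real.sqrt θ := Real.sqrt_pos.mpr hθ0
    have hss : Real.sqrt θ * Real.sqrt θ = θ := Real.mul_self_sqrt hθ0.le
    have e1 : A₁ * (θ - τ₁) / Real.sqrt θ = Real.sqrt θ * A₁ - τ₁ * A₁ / Real.sqrt θ := by
      field_simp
      linear_combination (-A₁) * hss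
    rw [e1]
    have hd : B₁ / Real.sqrt θ ≤ τ₁ * A₁ / Real.sqrt θ :=
      div_le_div_of_nonneg_right hB1A hs.le |>.trans_eq rfl
    linarith
  -- step 1 : restrict the integral
  have hstep1 : (∫ θ in τs..τ₂, (Real.sqrt θ * A₁ - B₁ / Real.sqrt θ) *
      Real.exp (lam * (θ - τ₂))) ≤
      ∫ θ in τ₁..τ₂, (Real.sqrt θ * A₁ - B₁ / Real.sqrt θ) * Real.exp (lam * (θ - τ₂)) := by
    apply intervalIntegral.integral_mono_interval hτs1.le hτs2.le le_rfl
    · refine (ae_restrict_iff' measurableSet_Ioc).mpr (Filter.Eventually.of_forall fun θ hθ => ?_)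
      have h0 : 0 ≤ A₁ * (θ - τ₁) / Real.sqrt θ := by
        apply div_nonneg _ (Real.sqrt_nonneg θ)
        exact mul_nonneg hA1nn (by linarith [hθ.1])
      exact mul_nonneg (le_trans h0 (hpt θ hθ.1.le)) (Real.exp_pos _).le
    · exact my_g_intable lam τ₂ A₁ B₁ h1 h12.le
  -- step 2 : pointwise constant lower bound on [τs, τ₂]
  set κ := (τs - τ₁) / Real.sqrt τ₂ with hκ
  have hsτ₂ : (0:ℝ) < Real.sqrt τ₂ := Real.sqrt_pos.mpr (by linarith)
  have hκpos : 0 < κ := div_pos (by linarith) hsτ₂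
  have hstep2 : (∫ θ in τs..τ₂, κ * A₁ * Real.exp (lam * (θ - τ₂))) ≤
      ∫ θ in τs..τ₂, (Real.sqrt θ * A₁ - B₁ / Real.sqrt θ) * Real.exp (lam * (θ - τ₂)) := by
    apply intervalIntegral.integral_mono_on hτs2.le
      (((my_expc_cont lam τ₂).intervalIntegrable _ _).const_mul _)
      (my_g_intable lam τ₂ A₁ B₁ (lt_trans h1 hτs1) hτs2.le)
    intro θ hθ
    apply mul_le_mul_of_nonneg_right _ (Real.exp_pos _).le
    refine le_trans ?_ (hpt θ (by linarith [hθ.1]))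
    rw [hκ, div_mul_eq_mul_div, mul_comm (τs - τ₁) A₁]
    apply div_le_div₀ (mul_nonneg hA1nn (by linarith [hθ.1]))
      (mul_le_mul_of_nonneg_left (by linarith [hθ.1]) hA1nn)
      (Real.sqrt_pos.mpr (by nlinarith [hθ.1]))
      (Real.sqrt_le_sqrt hθ.2)
  rw [intervalIntegral.integral_const_mul] at hstep2
  -- step 3 : lower bounds for A₁ and the tail exponential integral
  have hA1low := my_A_lower lam τ₁ hlam h1
  have hJlow := my_J_lower lam hlam hτs2.le
  have hτ2τs : τ₂ - τs = (τ₂ - τ₁)/2 := by rw [hτs]; ring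
  rw [hτ2τs] at hJlow
  set J := ∫ θ in τs..τ₂, Real.exp (lam * (θ - τ₂)) with hJ
  set aL := 1 / Real.sqrt τ₁ * (min (τ₁/2) 1 / (Real.exp 1 * (1 + lam))) with haL
  set jL := min ((τ₂ - τ₁)/2) 1 / (Real.exp 1 * (1 + lam)) with hjL
  have haLnn : 0 ≤ aL := by
    rw [haL]
    have : (0:ℝ) ≤ min (τ₁/2) 1 := le_min (by linarith) zero_le_one
    positivity
  have hjLnn : 0 ≤ jL := by
    rw [hjL]
    have : (0:ℝ) ≤ min ((τ₂ - τ₁)/2) 1 := le_min (by linarith) zero_le_one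
    positivity
  have hchain : κ * aL * jL ≤ κ * A₁ * J := by
    calc κ * aL * jL ≤ κ * A₁ * jL :=
          mul_le_mul_of_nonneg_right
            (mul_le_mul_of_nonneg_left hA1low hκpos.le) hjLnn
      _ ≤ κ * A₁ * J :=
          mul_le_mul_of_nonneg_left hJlow (mul_nonneg hκpos.le hA1nn)
  have hfinal : myCLow τ₁ τ₂ / (1 + lam)^2 = κ * aL * jL := by
    rw [myCLow, hκ, haL, hjL, hτs]
    have he : Real.exp 1 ≠ 0 := (Real.exp_pos 1).ne'
    have h2' : Real.sqrt τ₂ ≠ 0 := ne_of_gt hsτ₂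
    have h1' : Real.sqrt τ₁ ≠ 0 := ne_of_gt (Real.sqrt_pos.mpr h1)
    have hl : (1 + lam) ≠ 0 := h1lam.ne'
    field_simp
  rw [hfinal]
  exact le_trans hchain (le_trans hstep2 hstep1)

lemma my_D_upper (lam τ₁ τ₂ : ℝ) (hlam : 0 ≤ lam) (h1 : 0 < τ₁) (h12 : τ₁ < τ₂) :
    (∫ θ in (0:ℝ)..τ₁, Real.exp (lam * (θ - τ₁)) / Real.sqrt θ) *
          (∫ θ in (0:ℝ)..τ₂, Real.sqrt θ * Real.exp (lam * (θ - τ₂))) -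
        (∫ θ in (0:ℝ)..τ₁, Real.sqrt θ * Real.exp (lam * (θ - τ₁))) *
          (∫ θ in (0:ℝ)..τ₂, Real.exp (lam * (θ - τ₂)) / Real.sqrt θ) ≤
      myCUp τ₁ τ₂ / (1 + lam)^2 := by
  rw [my_key_identity lam τ₁ τ₂ h1 h12]
  set A₁ := ∫ u in (0:ℝ)..τ₁, Real.exp (lam * (u - τ₁)) / Real.sqrt u with hA₁def
  set B₁ := ∫ u in (0:ℝ)..τ₁, Real.sqrt u * Real.exp (lam * (u - τ₁)) with hB₁def
  have hA1nn : 0 ≤ A₁ := my_A_nonneg lam τ₁ h1.le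
  have hB1nn : 0 ≤ B₁ := my_B_nonneg lam τ₁ h1.le
  have h1lam : (0:ℝ) < 1 + lam := by linarith
  have hsτ₂ : (0:ℝ) < Real.sqrt τ₂ := Real.sqrt_pos.mpr (by linarith)
  have hstep : (∫ θ in τ₁..τ₂,
      (Real.sqrt θ * A₁ - B₁ / Real.sqrt θ) * Real.exp (lam * (θ - τ₂))) ≤
      ∫ θ in τ₁..τ₂, Real.sqrt τ₂ * A₁ * Real.exp (lam * (θ - τ₂)) := by
    apply intervalIntegral.integral_mono_on h12.le
      (my_g_intable lam τ₂ A₁ B₁ h1 h12.le)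
      (((my_expc_cont lam τ₂).intervalIntegrable _ _).const_mul _)
    intro θ hθ
    apply mul_le_mul_of_nonneg_right _ (Real.exp_pos _).le
    have hb : 0 ≤ B₁ / Real.sqrt θ := div_nonneg hB1nn (Real.sqrt_nonneg θ)
    have hmul : Real.sqrt θ * A₁ ≤ Real.sqrt τ₂ * A₁ :=
      mul_le_mul_of_nonneg_right (Real.sqrt_le_sqrt hθ.2) hA1nn
    linarith
  rw [intervalIntegral.integral_const_mul] at hstep
  set J := ∫ θ in τ₁..τ₂, Real.exp (lam * (θ - τ₂)) with hJ
  have hJnn : 0 ≤ J := my_J_nonneg lam h12.le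
  have hJup : J ≤ ((τ₂ - τ₁) + 1) / (1 + lam) := by
    rw [le_div_iff₀ h1lam, mul_comm]
    exact my_J_upper lam hlam h12.le
  set CA := 2 * Real.sqrt τ₁ + (4 * Real.sqrt (τ₁/2) / τ₁ + 1 / Real.sqrt (τ₁/2)) with hCA
  have hAup : A₁ ≤ CA / (1 + lam) := by
    rw [le_div_iff₀ h1lam, mul_comm]
    exact my_A_upper lam τ₁ hlam h1
  have hCAnn : 0 ≤ CA / (1 + lam) := le_trans hA1nn hAup
  have hchain : Real.sqrt τ₂ * A₁ * J ≤
      Real.sqrt τ₂ * (CA / (1 + lam)) * (((τ₂ - τ₁) + 1) / (1 + lam)) := by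
    calc Real.sqrt τ₂ * A₁ * J ≤ Real.sqrt τ₂ * A₁ * (((τ₂ - τ₁) + 1) / (1 + lam)) :=
          mul_le_mul_of_nonneg_left hJup (mul_nonneg hsτ₂.le hA1nn)
      _ ≤ Real.sqrt τ₂ * (CA / (1 + lam)) * (((τ₂ - τ₁) + 1) / (1 + lam)) := by
          apply mul_le_mul_of_nonneg_right
            (mul_le_mul_of_nonneg_left hAup hsτ₂.le)
          exact div_nonneg (by linarith) h1lam.le
  have hfinal : Real.sqrt τ₂ * (CA / (1 + lam)) * (((τ₂ - τ₁) + 1) / (1 + lam)) =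
      myCUp τ₁ τ₂ / (1 + lam)^2 := by
    have e1 : Real.sqrt τ₂ * (CA/(1 + lam)) = Real.sqrt τ₂ * CA / (1 + lam) :=
      (mul_div_assoc _ _ _).symm
    rw [e1, div_mul_div_comm, myCUp, hCA, ← pow_two]
  linarith [hstep, hchain, hfinal.symm.le]

theorem determinant_two_sided_bound (τ₁ τ₂ σ₀ S : ℝ) (hτ₁ : 0 < τ₁) (hτ : τ₁ < τ₂)
    (hσ₀ : 0 < σ₀) (hS : 0 < S) :
    ∃ C ≥ (1 : ℝ), ∀ ξ : ℝ,
      C⁻¹ / (1 + ξ ^ 2) ^ 2 ≤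
        S * ((∫ θ in (0 : ℝ)..τ₁, Real.exp ((σ₀ * ξ / Real.sqrt 2) ^ 2 * (θ - τ₁)) / Real.sqrt θ) *
              (∫ θ in (0 : ℝ)..τ₂, Real.sqrt θ * Real.exp ((σ₀ * ξ / Real.sqrt 2) ^ 2 * (θ - τ₂))) -
            (∫ θ in (0 : ℝ)..τ₁, Real.sqrt θ * Real.exp ((σ₀ * ξ / Real.sqrt 2) ^ 2 * (θ - τ₁))) *
              (∫ θ in (0 : ℝ)..τ₂, Real.exp ((σ₀ * ξ / Real.sqrt 2) ^ 2 * (θ - τ₂)) / Real.sqrt θ)) ∧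
      S * ((∫ θ in (0 : ℝ)..τ₁, Real.exp ((σ₀ * ξ / Real.sqrt 2) ^ 2 * (θ - τ₁)) / Real.sqrt θ) *
              (∫ θ in (0 : ℝ)..τ₂, Real.sqrt θ * Real.exp ((σ₀ * ξ / Real.sqrt 2) ^ 2 * (θ - τ₂))) -
            (∫ θ in (0 : ℝ)..τ₁, Real.sqrt θ * Real.exp ((σ₀ * ξ / Real.sqrt 2) ^ 2 * (θ - τ₁))) *
              (∫ θ in (0 : ℝ)..τ₂, Real.exp ((σ₀ * ξ / Real.sqrt 2) ^ 2 * (θ - τ₂)) / Real.sqrt θ)) ≤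
        C / (1 + ξ ^ 2) ^ 2 := by
  set k := σ₀^2/2 with hk
  have hkpos : 0 < k := by rw [hk]; positivity
  set m := min 1 k with hm
  set M := max 1 k with hM
  have hmpos : 0 < m := lt_min one_pos hkpos
  have hMpos : (0:ℝ) < M := lt_of_lt_of_le one_pos (le_max_left _ _)
  have hcL : 0 < myCLow τ₁ τ₂ := myCLow_pos hτ₁ hτ
  have hcU : 0 < myCUp τ₁ τ₂ := myCUp_pos hτ₁ hτ
  refine ⟨max (max 1 (S * myCUp τ₁ τ₂ / m^2)) (M^2 / (S * myCLow τ₁ τ₂)),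
    le_trans (le_max_left 1 _) (le_max_left _ _), fun ξ => ?_⟩
  set C := max (max 1 (S * myCUp τ₁ τ₂ / m^2)) (M^2 / (S * myCLow τ₁ τ₂)) with hC
  set lam := (σ₀ * ξ / Real.sqrt 2)^2 with hlamdef
  have hlam : 0 ≤ lam := sq_nonneg _
  have hlameq : lam = k * ξ^2 := by
    rw [hlamdef, hk, div_pow, Real.sq_sqrt (by norm_num : (0:ℝ) ≤ 2), mul_pow]
    ring
  have h1ξ : (0:ℝ) < 1 + ξ^2 := by positivity
  have h1lam : (0:ℝ) < 1 + lam := by linarith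
  have hml : m * (1 + ξ^2) ≤ 1 + lam := by
    rw [hlameq]
    have h1 : m ≤ 1 := min_le_left _ _
    have h2 : m ≤ k := min_le_right _ _
    nlinarith [sq_nonneg ξ]
  have hMu : 1 + lam ≤ M * (1 + ξ^2) := by
    rw [hlameq]
    have h1 : (1:ℝ) ≤ M := le_max_left _ _
    have h2 : k ≤ M := le_max_right _ _
    nlinarith [sq_nonneg ξ]
  have hD_low := my_D_lower lam τ₁ τ₂ hlam hτ₁ hτ
  have hD_up := my_D_upper lam τ₁ τ₂ hlam hτ₁ hτ
  constructor
  · -- lower bound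
    have key1 : myCLow τ₁ τ₂ / (M^2 * (1 + ξ^2)^2) ≤ myCLow τ₁ τ₂ / (1 + lam)^2 := by
      apply div_le_div_of_nonneg_left hcL.le (by positivity)
      nlinarith
    have key2 : S * (myCLow τ₁ τ₂ / (M^2 * (1 + ξ^2)^2)) ≤
        S * (myCLow τ₁ τ₂ / (1 + lam)^2) := mul_le_mul_of_nonneg_left key1 hS.le
    have key3 : S * (myCLow τ₁ τ₂ / (M^2 * (1 + ξ^2)^2)) =
        (S * myCLow τ₁ τ₂ / M^2) / (1 + ξ^2)^2 := by
      rw [div_div, mul_div_assoc]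
    have key4 : C⁻¹ ≤ S * myCLow τ₁ τ₂ / M^2 := by
      have hx : M^2 / (S * myCLow τ₁ τ₂) ≤ C := le_max_right _ _
      have hxpos : 0 < M^2 / (S * myCLow τ₁ τ₂) := by positivity
      calc C⁻¹ ≤ (M^2 / (S * myCLow τ₁ τ₂))⁻¹ := inv_anti₀ hxpos hx
        _ = S * myCLow τ₁ τ₂ / M^2 := by rw [inv_div]
    have key5 : C⁻¹ / (1 + ξ^2)^2 ≤ (S * myCLow τ₁ τ₂ / M^2) / (1 + ξ^2)^2 :=
      div_le_div_of_nonneg_right key4 (by positivity) |>.trans_eq rfl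
    have key6 := mul_le_mul_of_nonneg_left hD_low hS.le
    calc C⁻¹ / (1 + ξ^2)^2 ≤ (S * myCLow τ₁ τ₂ / M^2) / (1 + ξ^2)^2 := key5
      _ = S * (myCLow τ₁ τ₂ / (M^2 * (1 + ξ^2)^2)) := key3.symm
      _ ≤ S * (myCLow τ₁ τ₂ / (1 + lam)^2) := key2
      _ ≤ _ := key6
  · -- upper bound
    have key1 : myCUp τ₁ τ₂ / (1 + lam)^2 ≤ myCUp τ₁ τ₂ / (m^2 * (1 + ξ^2)^2) := by
      apply div_le_div_of_nonneg_left hcU.le (by positivity)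
      nlinarith [mul_nonneg (by linarith : (0:ℝ) ≤ 1 + lam - m * (1 + ξ^2))
        (by positivity : (0:ℝ) < 1 + lam + m * (1 + ξ^2)).le]
    have key2 := mul_le_mul_of_nonneg_left hD_up hS.le
    have key3 : S * (myCUp τ₁ τ₂ / (m^2 * (1 + ξ^2)^2)) =
        (S * myCUp τ₁ τ₂ / m^2) / (1 + ξ^2)^2 := by
      rw [div_div, mul_div_assoc]
    have key4 : S * myCUp τ₁ τ₂ / m^2 ≤ C :=
      le_trans (le_max_right 1 _) (le_max_left _ _)
    calc _ ≤ S * (myCUp τ₁ τ₂ / (1 + lam)^2) := key2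
      _ ≤ S * (myCUp τ₁ τ₂ / (m^2 * (1 + ξ^2)^2)) := mul_le_mul_of_nonneg_left key1 hS.le
      _ = (S * myCUp τ₁ τ₂ / m^2) / (1 + ξ^2)^2 := key3
      _ ≤ C / (1 + ξ^2)^2 := div_le_div_of_nonneg_right key4 (by positivity) |>.trans_eq rfl
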